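/- Let q > 0 and let Γ = [q; r_1,…,r_m; α] be a blockchain oceanic game with r_1,…,r_m ≥ 0 and ocean mass α ≥ q, and let Γ⁺ = [q; r_1,…,r_m, r_{m+1}; α] be obtained by adding a new major miner with weight r_{m+1} > 0 such that Σ_{j=1}^{m+1} r_j ≤ q. Then φ⁺_{m+1}/r_{m+1} = Φ/α, i.e., the new miner's value per unit of resource in Γ⁺ equals the oceanic value per unit of resource in Γ. (This extends the q = 1/2 case to an arbitrary quota.) -/

import Mathlib

open MeasureTheory Finset

/-- The uniform probability measure on the unit cube `[0,1]^m`. -/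
noncomputable def cubeMeasure (m : ℕ) : Measure (Fin m → ℝ) :=
  Measure.pi fun _ => volume.restrict (Set.Icc (0:ℝ) 1)

/-- The event that miner `i` is pivotal: with `r(x) = ∑_j r_j · 1{X_j < X_i}`,
`r(X_i) + α·X_i < q ≤ r(X_i) + α·X_i + r_i`. -/
def pivotEvent (m : ℕ) (q α : ℝ) (r : Fin m → ℝ) (i : Fin m) : Set (Fin m → ℝ) :=
  {x | (∑ j, if x j < x i then r j else 0) + α * x i < q ∧
       q ≤ (∑ j, if x j < x i then r j else 0) + α * x i + r i}

/-- The value `φ_i` of major miner `i` in the blockchain oceanic game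
`Γ = [q; r_1,…,r_m; α]`. -/
noncomputable def minerValue (m : ℕ) (q α : ℝ) (r : Fin m → ℝ) (i : Fin m) : ℝ :=
  (cubeMeasure m (pivotEvent m q α r i)).toReal

/-- The oceanic value `Φ = 1 - ∑_i φ_i`. -/
noncomputable def oceanicValue (m : ℕ) (q α : ℝ) (r : Fin m → ℝ) : ℝ :=
  1 - ∑ i, minerValue m q α r i

namespace BOG

noncomputable def mu1 : Measure ℝ := volume.restrict (Set.Icc (0:ℝ) 1)

instance : IsProbabilityMeasure mu1 :=
  ⟨by simp [mu1, Real.volume_Icc]⟩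

variable {m : ℕ}

/-- bottom of the jump interval of miner `k` -/
noncomputable def Lf (α : ℝ) (s y : Fin m → ℝ) (k : Fin m) : ℝ :=
  (∑ j, if y j < y k then s j else 0) + α * y k

/-- the step function -/
noncomputable def gf (α : ℝ) (s y : Fin m → ℝ) (t : ℝ) : ℝ :=
  (∑ k, if y k < t then s k else 0) + α * t

lemma measurable_gf (α : ℝ) (s y : Fin m → ℝ) : Measurable (gf α s y) := by
  apply Measurable.add
  · apply Finset.measurable_sum
    intro k _
    exact Measurable.ite (measurableSet_lt measurable_const measurable_id)
      measurable_const measurable_const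
  · exact measurable_id.const_mul α

lemma Lf_add_le (α : ℝ) (hα : 0 < α) (s y : Fin m → ℝ) (hs : ∀ k, 0 ≤ s k)
    {j k : Fin m} (hjk : y j < y k) :
    Lf α s y j + s j ≤ Lf α s y k := by
  classical
  have h1 : (∑ i, if y i < y j then s i else 0) + s j ≤ ∑ i, if y i < y k then s i else 0 := by
    rw [← Finset.sum_filter, ← Finset.sum_filter]
    have hj : j ∉ Finset.univ.filter (fun i => y i < y j) := by simp
    have key : ∑ a ∈ insert j (Finset.univ.filter (fun i => y i < y j)), s a ≤
        ∑ a ∈ Finset.univ.filter (fun i => y i < y k), s a := by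
      apply Finset.sum_le_sum_of_subset_of_nonneg
      · intro i hi
        simp only [Finset.mem_insert, Finset.mem_filter, Finset.mem_univ, true_and] at hi ⊢
        rcases hi with rfl | hi
        · exact hjk
        · exact hi.trans hjk
      · intro i _ _; exact hs i
    rw [Finset.sum_insert hj] at key
    linarith
  have h2 : α * y j ≤ α * y k := by nlinarith
  simp only [Lf]; linarith

lemma disjoint_Ioc (α : ℝ) (hα : 0 < α) (s y : Fin m → ℝ) (hs : ∀ k, 0 ≤ s k)
    (hinj : Function.Injective y) {j k : Fin m} (hjk : j ≠ k) :
    Disjoint (Set.Ioc (Lf α s y j) (Lf α s y j + s j))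
      (Set.Ioc (Lf α s y k) (Lf α s y k + s k)) := by
  have hne : y j ≠ y k := fun h => hjk (hinj h)
  rw [Set.Ioc_disjoint_Ioc]
  rcases lt_or_gt_of_ne hne with h | h
  · have := Lf_add_le α hα s y hs h
    calc min (Lf α s y j + s j) (Lf α s y k + s k) ≤ Lf α s y j + s j := min_le_left _ _
    _ ≤ Lf α s y k := this
    _ ≤ max (Lf α s y j) (Lf α s y k) := le_max_right _ _
  · have := Lf_add_le α hα s y hs h
    calc min (Lf α s y j + s j) (Lf α s y k + s k) ≤ Lf α s y k + s k := min_le_right _ _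
    _ ≤ Lf α s y j := this
    _ ≤ max (Lf α s y j) (Lf α s y k) := le_max_left _ _

lemma ofReal_clamp (α : ℝ) (s y : Fin m → ℝ) (hs : ∀ k, 0 ≤ s k) (c : ℝ) (k : Fin m) :
    ENNReal.ofReal (min (s k) (max 0 (c - Lf α s y k))) =
      volume (Set.Ioc (Lf α s y k) (min (Lf α s y k + s k) c)) := by
  rw [Real.volume_Ioc]
  rcases le_or_gt c (Lf α s y k) with h | h
  · have h1 : max 0 (c - Lf α s y k) = 0 := max_eq_left (by linarith)
    have h2 : min (s k) 0 = 0 := min_eq_right (hs k)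
    rw [h1, h2]
    have : min (Lf α s y k + s k) c - Lf α s y k ≤ 0 := by
      have := min_le_right (Lf α s y k + s k) c; linarith
    rw [ENNReal.ofReal_of_nonpos this, ENNReal.ofReal_zero]
  · congr 1
    have h1 : max 0 (c - Lf α s y k) = c - Lf α s y k := max_eq_right (by linarith)
    rw [h1]
    rcases le_total (s k) (c - Lf α s y k) with h2 | h2
    · rw [min_eq_left h2, min_eq_left (show Lf α s y k + s k ≤ c by linarith)]
      ring
    · rw [min_eq_right h2, min_eq_right (show c ≤ Lf α s y k + s k by linarith)]

lemma L0 (α c : ℝ) (hα : 0 < α) (s y : Fin m → ℝ) (hs : ∀ k, 0 ≤ s k)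
    (hy : ∀ k, y k ∈ Set.Icc (0:ℝ) 1) (hinj : Function.Injective y)
    (hc1 : ∑ k, s k ≤ c) (hc2 : c ≤ α) :
    mu1 {t | gf α s y t < c} =
      ENNReal.ofReal ((c - ∑ k, min (s k) (max 0 (c - Lf α s y k))) / α) := by
  classical
  set L := Lf α s y with hL
  set mk : Fin m → ℝ := fun k => min (s k) (max 0 (c - L k)) with hmk
  have hmk_nonneg : ∀ k, 0 ≤ mk k := fun k => le_min (hs k) (le_max_left _ _)
  have hmk_le : ∀ k, mk k ≤ s k := fun k => min_le_left _ _
  set ψ : ℝ := c - ∑ k, mk k with hψ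
  have hψ_nonneg : 0 ≤ ψ := by
    have : ∑ k, mk k ≤ ∑ k, s k := Finset.sum_le_sum fun k _ => hmk_le k
    simp only [hψ]; linarith
  have hψ_le : ψ ≤ α := by
    have : 0 ≤ ∑ k, mk k := Finset.sum_nonneg fun k _ => hmk_nonneg k
    simp only [hψ]; linarith
  set tstar : ℝ := ψ / α with htstar
  have htstar0 : 0 ≤ tstar := div_nonneg hψ_nonneg hα.le
  have htstar1 : tstar ≤ 1 := by
    rw [htstar, div_le_one hα]; exact hψ_le
  -- part (i)
  have hi : ∀ t : ℝ, t < tstar → gf α s y t < c := by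
    intro t ht
    have hαt : α * t < ψ := by
      rw [htstar, lt_div_iff₀ hα] at ht; linarith [ht]
    set B := Finset.univ.filter (fun k => y k < t ∧ mk k < s k) with hB
    rcases B.eq_empty_or_nonempty with hBe | hBne
    · -- all jumps below t are fully counted
      have hall : ∀ k, y k < t → mk k = s k := by
        intro k hk
        by_contra hne
        have : k ∈ B := by simp [hB, hk, lt_of_le_of_ne (hmk_le k) hne]
        rw [hBe] at this; exact absurd this (Finset.notMem_empty k)
      have : gf α s y t = α * t + ∑ k ∈ Finset.univ.filter (fun k => y k < t), mk k := by
        rw [gf, ← Finset.sum_filter]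
        rw [Finset.sum_congr rfl (fun k hk => (hall k (Finset.mem_filter.mp hk).2).symm)]
        ring
      rw [this]
      have h1 : ∑ k ∈ Finset.univ.filter (fun k => y k < t), mk k ≤ ∑ k, mk k :=
        Finset.sum_le_sum_of_subset_of_nonneg (Finset.filter_subset _ _)
          (fun k _ _ => hmk_nonneg k)
      simp only [hψ] at hαt
      linarith
    · exfalso
      obtain ⟨k0, hk0B, hk0min⟩ := B.exists_min_image y hBne
      simp only [hB, Finset.mem_filter, Finset.mem_univ, true_and] at hk0B
      obtain ⟨hk0t, hk0lt⟩ := hk0B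
      have h1 : c ≤ L k0 + mk k0 := by
        have : mk k0 = max 0 (c - L k0) := by
          rcases min_cases (s k0) (max 0 (c - L k0)) with ⟨h, _⟩ | ⟨h, _⟩
          · exfalso; rw [hmk] at hk0lt; simp only [h] at hk0lt; exact lt_irrefl _ hk0lt
          · exact h
        have h2 : c - L k0 ≤ mk k0 := this ▸ le_max_right _ _
        linarith
      set G := Finset.univ.filter (fun j => y j < y k0) with hG
      have hLk0 : L k0 = (∑ j ∈ G, s j) + α * y k0 := by
        rw [hL, Lf, Finset.sum_filter]
      have hsummk : (∑ j ∈ G, mk j) + mk k0 ≤ ∑ k, mk k := by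
        have hk0G : k0 ∉ G := by simp [hG]
        have key : ∑ a ∈ insert k0 G, mk a ≤ ∑ k, mk k :=
          Finset.sum_le_sum_of_subset_of_nonneg (Finset.subset_univ _)
            (fun k _ _ => hmk_nonneg k)
        rw [Finset.sum_insert hk0G] at key
        linarith
      have hpos : 0 < ∑ j ∈ G, (s j - mk j) := by
        have hy0 : α * y k0 < α * t := by
          apply mul_lt_mul_of_pos_left hk0t hα
        rw [Finset.sum_sub_distrib]
        simp only [hψ] at hαt
        linarith
      obtain ⟨j, hjG, hj⟩ := Finset.exists_lt_of_sum_lt (by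
        simpa using hpos : (∑ j ∈ G, (0:ℝ)) < ∑ j ∈ G, (s j - mk j))
      simp only [hG, Finset.mem_filter, Finset.mem_univ, true_and] at hjG
      have hjB : j ∈ B := by
        simp only [hB, Finset.mem_filter, Finset.mem_univ, true_and]
        exact ⟨hjG.trans hk0t, by linarith⟩
      have := hk0min j hjB
      linarith
  -- part (ii)
  have hii : ∀ t : ℝ, gf α s y t < c → α * t ≤ ψ := by
    intro t hgt
    set F := Finset.univ.filter (fun k => y k < t) with hF
    have hgt_eq : gf α s y t = α * t + ∑ k ∈ F, s k := by
      rw [gf, Finset.sum_filter]; ring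
    -- bound on the jumps above t
    have hbound : ∑ k ∈ Fᶜ, mk k ≤ c - gf α s y t := by
      have hunion : ∑ k ∈ Fᶜ, ENNReal.ofReal (mk k) =
          volume (⋃ k ∈ Fᶜ, Set.Ioc (L k) (min (L k + s k) c)) := by
        rw [measure_biUnion_finset]
        · exact Finset.sum_congr rfl fun k _ => ofReal_clamp α s y hs c k
        · intro j hj k hk hjk
          exact ((disjoint_Ioc α hα s y hs hinj hjk).mono
            (Set.Ioc_subset_Ioc_right (min_le_left _ _))
            (Set.Ioc_subset_Ioc_right (min_le_left _ _)))
        · intro k _; exact measurableSet_Ioc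
      have hsub : (⋃ k ∈ Fᶜ, Set.Ioc (L k) (min (L k + s k) c)) ⊆ Set.Ioc (gf α s y t) c := by
        intro u hu
        simp only [Set.mem_iUnion] at hu
        obtain ⟨k, hk, hu1, hu2⟩ := hu
        simp only [hF, Finset.mem_compl, Finset.mem_filter, Finset.mem_univ, true_and,
          not_lt] at hk
        constructor
        · have hgL : gf α s y t ≤ L k := by
            rw [hgt_eq, hL, Lf]
            have h1 : ∑ j ∈ F, s j ≤ ∑ j, if y j < y k then s j else 0 := by
              rw [← Finset.sum_filter]
              apply Finset.sum_le_sum_of_subset_of_nonneg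
              · intro i hi
                simp only [hF, Finset.mem_filter, Finset.mem_univ, true_and] at hi ⊢
                exact lt_of_lt_of_le hi hk
              · intro i _ _; exact hs i
            have h2 : α * t ≤ α * y k := mul_le_mul_of_nonneg_left hk hα.le
            linarith
          linarith
        · exact hu2.trans (min_le_right _ _)
      have h1 : ∑ k ∈ Fᶜ, ENNReal.ofReal (mk k) ≤ ENNReal.ofReal (c - gf α s y t) := by
        rw [hunion, ← Real.volume_Ioc]
        exact measure_mono hsub
      rw [← ENNReal.ofReal_sum_of_nonneg (fun k _ => hmk_nonneg k)] at h1
      exact (ENNReal.ofReal_le_ofReal_iff (by linarith)).mp h1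
    have hsplit : ∑ k, mk k = ∑ k ∈ F, mk k + ∑ k ∈ Fᶜ, mk k :=
      (Finset.sum_add_sum_compl F mk).symm
    have hFle : ∑ k ∈ F, mk k ≤ ∑ k ∈ F, s k := Finset.sum_le_sum fun k _ => hmk_le k
    simp only [hψ]
    rw [hsplit]
    rw [hgt_eq] at hbound
    linarith
  -- measure computation
  have hmeas : MeasurableSet {t : ℝ | gf α s y t < c} :=
    measurableSet_lt (measurable_gf α s y) measurable_const
  rw [mu1, Measure.restrict_apply hmeas]
  have hsub1 : Set.Ico (0:ℝ) tstar ⊆ {t | gf α s y t < c} ∩ Set.Icc 0 1 := by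
    intro t ht
    exact ⟨hi t ht.2, ht.1, le_trans ht.2.le htstar1⟩
  have hsub2 : {t | gf α s y t < c} ∩ Set.Icc (0:ℝ) 1 ⊆ Set.Icc 0 tstar := by
    intro t ⟨ht1, ht2, _⟩
    refine ⟨ht2, ?_⟩
    rw [htstar, le_div_iff₀ hα]
    have := hii t ht1; linarith
  have h1 : volume ({t | gf α s y t < c} ∩ Set.Icc (0:ℝ) 1) ≤ ENNReal.ofReal tstar := by
    calc volume ({t | gf α s y t < c} ∩ Set.Icc (0:ℝ) 1) ≤ volume (Set.Icc 0 tstar) :=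
      measure_mono hsub2
    _ = ENNReal.ofReal tstar := by rw [Real.volume_Icc, sub_zero]
  have h2 : ENNReal.ofReal tstar ≤ volume ({t | gf α s y t < c} ∩ Set.Icc (0:ℝ) 1) := by
    calc ENNReal.ofReal tstar = volume (Set.Ico 0 tstar) := by rw [Real.volume_Ico, sub_zero]
    _ ≤ _ := measure_mono hsub1
  exact le_antisymm h1 h2


lemma ofReal_max0 (x : ℝ) : ENNReal.ofReal (max 0 x) = ENNReal.ofReal x := by
  rcases le_total x 0 with h | h
  · rw [max_eq_left h, ENNReal.ofReal_of_nonpos h, ENNReal.ofReal_zero]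
  · rw [max_eq_right h]

lemma clamp_diff (L s q ρ : ℝ) (hs : 0 ≤ s) (hρ : 0 ≤ ρ) :
    min s (max 0 (q - L)) - min s (max 0 ((q - ρ) - L)) =
      max 0 (min q (L + s) - max (q - ρ) L) := by
  simp only [min_def, max_def]
  split_ifs <;> linarith

lemma clamp_mono (L s q ρ : ℝ) (hρ : 0 ≤ ρ) :
    min s (max 0 ((q - ρ) - L)) ≤ min s (max 0 (q - L)) := by
  apply min_le_min le_rfl
  apply max_le_max le_rfl
  linarith

lemma C1 (α q ρ : ℝ) (hα : 0 < α) (s y : Fin m → ℝ) (hs : ∀ k, 0 ≤ s k)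
    (hy : ∀ k, y k ∈ Set.Icc (0:ℝ) 1) (hinj : Function.Injective y)
    (hρ : 0 ≤ ρ) (hq1 : (∑ k, s k) + ρ ≤ q) (hq2 : q ≤ α) :
    mu1 {t | gf α s y t < q ∧ q ≤ gf α s y t + ρ} =
      (ENNReal.ofReal α)⁻¹ *
        volume (Set.Ioc (q - ρ) q \ ⋃ k, Set.Ioc (Lf α s y k) (Lf α s y k + s k)) := by
  classical
  set L := Lf α s y with hLdef
  have hsnn : 0 ≤ ∑ k, s k := Finset.sum_nonneg fun k _ => hs k
  -- abbreviations
  set mq : Fin m → ℝ := fun k => min (s k) (max 0 (q - L k)) with hmq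
  set mq' : Fin m → ℝ := fun k => min (s k) (max 0 ((q - ρ) - L k)) with hmq'
  set D : Fin m → ℝ := fun k => mq k - mq' k with hD
  have hDnn : ∀ k, 0 ≤ D k := fun k => sub_nonneg.mpr (clamp_mono (L k) (s k) q ρ hρ)
  -- left side via L0
  have hLq : mu1 {t | gf α s y t < q} = ENNReal.ofReal ((q - ∑ k, mq k) / α) :=
    L0 α q hα s y hs hy hinj (by linarith) hq2
  have hLq' : mu1 {t | gf α s y t < q - ρ} =
      ENNReal.ofReal (((q - ρ) - ∑ k, mq' k) / α) :=
    L0 α (q - ρ) hα s y hs hy hinj (by linarith) (by linarith)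
  have hmqs : ∀ k, mq k ≤ s k := fun k => min_le_left _ _
  have hmq's : ∀ k, 0 ≤ mq' k := fun k => le_min (hs k) (le_max_left _ _)
  have hψ'nn : 0 ≤ ((q - ρ) - ∑ k, mq' k) := by
    have : ∑ k, mq' k ≤ ∑ k, s k := Finset.sum_le_sum fun k _ => min_le_left _ _
    linarith
  have hψnn : 0 ≤ (q - ∑ k, mq k) := by
    have : ∑ k, mq k ≤ ∑ k, s k := Finset.sum_le_sum fun k _ => min_le_left _ _
    linarith
  have hsetdiff : {t : ℝ | gf α s y t < q ∧ q ≤ gf α s y t + ρ} =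
      {t | gf α s y t < q} \ {t | gf α s y t < q - ρ} := by
    ext t
    simp only [Set.mem_setOf_eq, Set.mem_diff, not_lt]
    constructor
    · rintro ⟨h1, h2⟩; exact ⟨h1, by linarith⟩
    · rintro ⟨h1, h2⟩; exact ⟨h1, by linarith⟩
  have hsub : {t : ℝ | gf α s y t < q - ρ} ⊆ {t | gf α s y t < q} := by
    intro t ht; simp only [Set.mem_setOf_eq] at *; linarith
  have hmeas' : MeasurableSet {t : ℝ | gf α s y t < q - ρ} :=
    measurableSet_lt (measurable_gf α s y) measurable_const
  have hLHS : mu1 {t | gf α s y t < q ∧ q ≤ gf α s y t + ρ} =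
      ENNReal.ofReal ((q - ∑ k, mq k) / α) - ENNReal.ofReal (((q - ρ) - ∑ k, mq' k) / α) := by
    rw [hsetdiff, measure_diff hsub hmeas'.nullMeasurableSet (measure_ne_top _ _), hLq, hLq']
  -- right side
  set I : Set ℝ := Set.Ioc (q - ρ) q with hI
  set U : Set ℝ := ⋃ k, Set.Ioc (L k) (L k + s k) with hU
  have hJmeas : ∀ k : Fin m, MeasurableSet (Set.Ioc (L k) (L k + s k)) :=
    fun k => measurableSet_Ioc
  have hIU : I ∩ U = ⋃ k, (I ∩ Set.Ioc (L k) (L k + s k)) := by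
    rw [Set.inter_iUnion]
  have hvolIU : volume (I ∩ U) = ∑ k, ENNReal.ofReal (D k) := by
    rw [hIU, measure_iUnion ?_ (fun k => (measurableSet_Ioc.inter (hJmeas k)))]
    · rw [tsum_fintype]
      apply Finset.sum_congr rfl
      intro k _
      rw [Set.Ioc_inter_Ioc, Real.volume_Ioc, ← ofReal_max0,
        ← clamp_diff (L k) (s k) q ρ (hs k) hρ]
    · intro j k hjk
      apply Disjoint.mono (Set.inter_subset_right) (Set.inter_subset_right)
      exact disjoint_Ioc α hα s y hs hinj hjk
  have hIUsub : I ∩ U ⊆ I := Set.inter_subset_left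
  have hUmeas : MeasurableSet U := MeasurableSet.iUnion hJmeas
  have hRHSdiff : volume (I \ U) = volume I - volume (I ∩ U) := by
    have h0 : I \ U = I \ (I ∩ U) := by rw [Set.diff_self_inter]
    rw [h0, measure_diff hIUsub (measurableSet_Ioc.inter hUmeas).nullMeasurableSet]
    exact (lt_of_le_of_lt (measure_mono hIUsub)
      (by rw [hI, Real.volume_Ioc]; exact ENNReal.ofReal_lt_top)).ne
  have hvolI : volume I = ENNReal.ofReal ρ := by
    rw [hI, Real.volume_Ioc]; congr 1; ring
  have hsumD_le : ∑ k, D k ≤ ρ := by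
    have h1 : volume (I ∩ U) ≤ volume I := measure_mono hIUsub
    rw [hvolIU, hvolI, ← ENNReal.ofReal_sum_of_nonneg (fun k _ => hDnn k)] at h1
    exact (ENNReal.ofReal_le_ofReal_iff hρ).mp h1
  have hRHS : volume (I \ U) = ENNReal.ofReal (ρ - ∑ k, D k) := by
    rw [hRHSdiff, hvolIU, hvolI, ← ENNReal.ofReal_sum_of_nonneg (fun k _ => hDnn k),
      ← ENNReal.ofReal_sub _ (Finset.sum_nonneg fun k _ => hDnn k)]
  -- combine
  rw [hLHS, hRHS]
  rw [← ENNReal.ofReal_sub _ (by positivity)]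
  have harith : (q - ∑ k, mq k) / α - ((q - ρ) - ∑ k, mq' k) / α = (ρ - ∑ k, D k) / α := by
    rw [div_sub_div_same]
    congr 1
    rw [hD]
    simp only []
    rw [Finset.sum_sub_distrib]
    ring
  rw [harith, ENNReal.ofReal_div_of_pos hα, ENNReal.div_eq_inv_mul]


lemma cube_eq (m : ℕ) : cubeMeasure m = Measure.pi (fun _ : Fin m => mu1) := rfl

instance (m : ℕ) : IsProbabilityMeasure (cubeMeasure m) :=
  inferInstanceAs (IsProbabilityMeasure (Measure.pi fun _ : Fin m => mu1))

lemma mu1_singleton (a : ℝ) : mu1 {a} = 0 := by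
  rw [mu1, Measure.restrict_apply (measurableSet_singleton a)]
  exact measure_mono_null Set.inter_subset_left Real.volume_singleton

lemma ae_coords (m : ℕ) : ∀ᵐ y ∂(cubeMeasure m), ∀ k, y k ∈ Set.Icc (0:ℝ) 1 := by
  rw [MeasureTheory.ae_all_iff]
  intro k
  rw [ae_iff]
  have : {y : Fin m → ℝ | ¬ y k ∈ Set.Icc (0:ℝ) 1} =
      Function.eval k ⁻¹' (Set.Icc (0:ℝ) 1)ᶜ := rfl
  rw [this, cube_eq]
  apply Measure.pi_eval_preimage_null
  rw [mu1, Measure.restrict_apply measurableSet_Icc.compl, Set.compl_inter_self]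
  exact measure_empty

lemma diag_null (m : ℕ) (j k : Fin m) (hjk : j ≠ k) :
    cubeMeasure m {y | y j = y k} = 0 := by
  cases m with
  | zero => exact j.elim0
  | succ n =>
    obtain ⟨k', hk'⟩ := Fin.exists_succAbove_eq hjk.symm
    set e := MeasurableEquiv.piFinSuccAbove (fun _ : Fin (n+1) => ℝ) j with he
    have hmp := (measurePreserving_piFinSuccAbove (fun _ : Fin (n+1) => mu1) j).map_eq
    have hS : MeasurableSet {p : ℝ × (Fin n → ℝ) | p.1 = p.2 k'} :=
      measurableSet_eq_fun measurable_fst ((measurable_pi_apply k').comp measurable_snd)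
    have hpre : {y : Fin (n+1) → ℝ | y j = y k} = e ⁻¹' {p | p.1 = p.2 k'} := by
      ext y
      simp only [Set.mem_setOf_eq, Set.mem_preimage]
      have h1 : (e y).1 = y j := rfl
      have h2 : (e y).2 k' = y k := by rw [← hk']; rfl
      rw [h1, h2]
    rw [cube_eq, hpre, ← Measure.map_apply e.measurable hS, hmp,
      Measure.prod_apply_symm hS]
    have hz : ∀ z : Fin n → ℝ,
        ((fun t => (t, z)) ⁻¹' {p : ℝ × (Fin n → ℝ) | p.1 = p.2 k'}) = {z k'} := by
      intro z; ext t; simp [Set.mem_singleton_iff]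
    simp only [hz, mu1_singleton, lintegral_const, zero_mul]

lemma ae_inj (m : ℕ) : ∀ᵐ y ∂(cubeMeasure m), Function.Injective y := by
  have h : ∀ᵐ y ∂(cubeMeasure m), ∀ j k : Fin m, j ≠ k → y j ≠ y k := by
    rw [MeasureTheory.ae_all_iff]
    intro j
    rw [MeasureTheory.ae_all_iff]
    intro k
    by_cases hjk : j = k
    · filter_upwards with y hne; exact absurd hjk hne
    · rw [ae_iff]
      apply measure_mono_null _ (diag_null m j k hjk)
      intro y hy
      simp only [Set.mem_setOf_eq] at hy ⊢
      push_neg at hy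
      exact hy.2
  filter_upwards [h] with y hy
  intro a b hab
  by_contra hne
  exact hy a b hne hab

lemma meas_pivot (m : ℕ) (q α : ℝ) (r : Fin m → ℝ) (i : Fin m) :
    MeasurableSet (pivotEvent m q α r i) := by
  have hf : Measurable (fun x : Fin m → ℝ => (∑ j, if x j < x i then r j else 0) + α * x i) := by
    apply Measurable.add
    · apply Finset.measurable_sum
      intro j _
      exact Measurable.ite (measurableSet_lt (measurable_pi_apply j) (measurable_pi_apply i))
        measurable_const measurable_const
    · exact measurable_const.mul (measurable_pi_apply i)
  exact (measurableSet_lt hf measurable_const).inter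
    (measurableSet_le measurable_const (hf.add measurable_const))

lemma pivot_eq_Ioc (m : ℕ) (u α : ℝ) (s : Fin m → ℝ) (k : Fin m) :
    pivotEvent m u α s k = {y | u ∈ Set.Ioc (Lf α s y k) (Lf α s y k + s k)} := by
  ext y
  simp only [pivotEvent, Lf, Set.mem_setOf_eq, Set.mem_Ioc]

lemma pivot_aedisjoint (m : ℕ) (u α : ℝ) (hα : 0 < α) (s : Fin m → ℝ) (hs : ∀ k, 0 ≤ s k)
    {j k : Fin m} (hjk : j ≠ k) :
    cubeMeasure m (pivotEvent m u α s j ∩ pivotEvent m u α s k) = 0 := by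
  apply measure_mono_null _ ((ae_iff.mp (ae_inj m)))
  intro y hy
  simp only [pivot_eq_Ioc, Set.mem_inter_iff, Set.mem_setOf_eq] at hy
  intro hinjy
  exact Set.disjoint_left.mp (disjoint_Ioc α hα s y hs hinjy hjk) hy.1 hy.2

lemma sum_pivot_eq (m : ℕ) (u α : ℝ) (hα : 0 < α) (s : Fin m → ℝ) (hs : ∀ k, 0 ≤ s k) :
    ∑ k, cubeMeasure m (pivotEvent m u α s k) =
      cubeMeasure m (⋃ k, pivotEvent m u α s k) := by
  rw [measure_iUnion₀ ?_ (fun k => (meas_pivot m u α s k).nullMeasurableSet), tsum_fintype]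
  intro j k hjk
  exact pivot_aedisjoint m u α hα s hs hjk

lemma sum_pivot_le_one (m : ℕ) (u α : ℝ) (hα : 0 < α) (s : Fin m → ℝ) (hs : ∀ k, 0 ≤ s k) :
    ∑ k, cubeMeasure m (pivotEvent m u α s k) ≤ 1 := by
  rw [sum_pivot_eq m u α hα s hs]
  exact prob_le_one


lemma key (m : ℕ) (α : ℝ) (hα : 0 < α)
    (ih : ∀ (s : Fin m → ℝ), (∀ k, 0 ≤ s k) → ∀ u v : ℝ,
      (∑ k, s k) ≤ u → u ≤ α → (∑ k, s k) ≤ v → v ≤ α → ∀ k,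
      minerValue m u α s k = minerValue m v α s k)
    (r : Fin (m+1) → ℝ) (hr : ∀ j, 0 ≤ r j) (q : ℝ)
    (hsum : (∑ j, r j) ≤ q) (hqα : q ≤ α) (i : Fin (m+1)) :
    α * minerValue (m+1) q α r i =
      r i * oceanicValue m q α (fun k => r (i.succAbove k)) := by
  classical
  set s : Fin m → ℝ := fun k => r (i.succAbove k) with hsdef
  set ρ : ℝ := r i with hρdef
  have hs : ∀ k, 0 ≤ s k := fun k => hr _
  have hρ : 0 ≤ ρ := hr i
  have hsplitsum : (∑ j, r j) = ρ + ∑ k, s k := Fin.sum_univ_succAbove r i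
  have hss : (∑ k, s k) + ρ ≤ q := by linarith
  set ν := cubeMeasure m with hν
  set S : Set (ℝ × (Fin m → ℝ)) :=
    {p | gf α s p.2 p.1 < q ∧ q ≤ gf α s p.2 p.1 + ρ} with hSdef
  have hgmeas : Measurable (fun p : ℝ × (Fin m → ℝ) => gf α s p.2 p.1) := by
    apply Measurable.add
    · apply Finset.measurable_sum
      intro k _
      exact Measurable.ite
        (measurableSet_lt (measurable_snd.eval) measurable_fst)
        measurable_const measurable_const
    · exact measurable_const.mul measurable_fst
  have hSmeas : MeasurableSet S :=
    (measurableSet_lt hgmeas measurable_const).inter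
      (measurableSet_le measurable_const (hgmeas.add measurable_const))
  set e := MeasurableEquiv.piFinSuccAbove (fun _ : Fin (m+1) => ℝ) i with he
  have hE : pivotEvent (m+1) q α r i = e ⁻¹' S := by
    ext x
    have hsum2 : (∑ j, if x j < x i then r j else 0)
        = ∑ k, if x (i.succAbove k) < x i then s k else 0 := by
      rw [Fin.sum_univ_succAbove (fun j => if x j < x i then r j else 0) i]
      simp [lt_irrefl]
      rfl
    have h1 : (e x).1 = x i := rfl
    have h2 : (e x).2 = fun k => x (i.succAbove k) := rfl
    simp only [pivotEvent, Set.mem_preimage, hSdef, Set.mem_setOf_eq, gf, h1, h2, hsum2]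
    exact Iff.rfl
  have hcube : cubeMeasure (m+1) (pivotEvent (m+1) q α r i) = (mu1.prod ν) S := by
    rw [hE, ← Measure.map_apply e.measurable hSmeas, cube_eq,
      (measurePreserving_piFinSuccAbove (fun _ : Fin (m+1) => mu1) i).map_eq]
    rfl
  set I : Set ℝ := Set.Ioc (q - ρ) q with hI
  have hprod1 : (mu1.prod ν) S
      = ∫⁻ y, mu1 {t | gf α s y t < q ∧ q ≤ gf α s y t + ρ} ∂ν := by
    rw [Measure.prod_apply_symm hSmeas]
    rfl
  have hslice : ∀ᵐ y ∂ν, mu1 {t | gf α s y t < q ∧ q ≤ gf α s y t + ρ}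
      = (ENNReal.ofReal α)⁻¹ *
        volume (I \ ⋃ k, Set.Ioc (Lf α s y k) (Lf α s y k + s k)) := by
    filter_upwards [ae_coords m, ae_inj m] with y h1 h2
    exact C1 α q ρ hα s y hs h1 h2 hρ hss hqα
  have hainv : (ENNReal.ofReal α)⁻¹ ≠ ⊤ :=
    ENNReal.inv_ne_top.mpr (ENNReal.ofReal_pos.mpr hα).ne'
  have hstep : ∫⁻ y, mu1 {t | gf α s y t < q ∧ q ≤ gf α s y t + ρ} ∂ν
      = (ENNReal.ofReal α)⁻¹ *
        ∫⁻ y, volume (I \ ⋃ k, Set.Ioc (Lf α s y k) (Lf α s y k + s k)) ∂ν := by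
    rw [lintegral_congr_ae hslice, lintegral_const_mul' _ _ hainv]
  set T : Set ((Fin m → ℝ) × ℝ) :=
    {p | p.2 ∈ I \ ⋃ k, Set.Ioc (Lf α s p.1 k) (Lf α s p.1 k + s k)} with hT
  have hLmeas : ∀ k : Fin m, Measurable (fun y : Fin m → ℝ => Lf α s y k) := by
    intro k
    apply Measurable.add
    · apply Finset.measurable_sum; intro j _
      exact Measurable.ite
        (measurableSet_lt (measurable_pi_apply j) (measurable_pi_apply k))
        measurable_const measurable_const
    · exact measurable_const.mul (measurable_pi_apply k)
  have hTmeas : MeasurableSet T := by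
    have hTeq : T = (Prod.snd ⁻¹' I) ∩ (⋃ k, {p : (Fin m → ℝ) × ℝ |
        Lf α s p.1 k < p.2 ∧ p.2 ≤ Lf α s p.1 k + s k})ᶜ := by
      ext p
      simp only [hT, Set.mem_setOf_eq, Set.mem_diff, Set.mem_inter_iff, Set.mem_preimage,
        Set.mem_compl_iff, Set.mem_iUnion, Set.mem_Ioc, not_exists]
    rw [hTeq]
    exact (measurable_snd measurableSet_Ioc).inter ((MeasurableSet.iUnion fun k =>
      ((measurableSet_lt ((hLmeas k).comp measurable_fst) measurable_snd).inter
        (measurableSet_le measurable_snd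
          (((hLmeas k).comp measurable_fst).add measurable_const)))).compl)
  have htone : ∫⁻ y, volume (I \ ⋃ k, Set.Ioc (Lf α s y k) (Lf α s y k + s k)) ∂ν
      = ∫⁻ u, ν {y | u ∈ I \ ⋃ k, Set.Ioc (Lf α s y k) (Lf α s y k + s k)} := by
    have h1 : ∀ y : Fin m → ℝ,
        (I \ ⋃ k, Set.Ioc (Lf α s y k) (Lf α s y k + s k)) = Prod.mk y ⁻¹' T := fun y => rfl
    simp_rw [h1]
    rw [← Measure.prod_apply hTmeas, Measure.prod_apply_symm hTmeas]
    rfl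
  have hind : ∀ u : ℝ, ν {y | u ∈ I \ ⋃ k, Set.Ioc (Lf α s y k) (Lf α s y k + s k)}
      = I.indicator (fun u => ν ((⋃ k, pivotEvent m u α s k)ᶜ)) u := by
    intro u
    by_cases hu : u ∈ I
    · rw [Set.indicator_of_mem hu]
      congr 1
      ext y
      simp only [Set.mem_setOf_eq, Set.mem_diff, hu, true_and, Set.mem_compl_iff,
        Set.mem_iUnion, not_exists, pivot_eq_Ioc, Set.mem_Ioc]
    · rw [Set.indicator_of_notMem hu]
      have h0 : {y : Fin m → ℝ | u ∈ I \ ⋃ k, Set.Ioc (Lf α s y k) (Lf α s y k + s k)}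
          = ∅ := by
        ext y; simp [Set.mem_diff, hu]
      rw [h0, measure_empty]
  have hmain : ∫⁻ u, ν {y | u ∈ I \ ⋃ k, Set.Ioc (Lf α s y k) (Lf α s y k + s k)}
      = (1 - ∑ k, ν (pivotEvent m q α s k)) * ENNReal.ofReal ρ := by
    simp_rw [hind]
    rw [lintegral_indicator measurableSet_Ioc]
    rw [setLIntegral_congr_fun measurableSet_Ioc
      (g := fun _ => (1 - ∑ k, ν (pivotEvent m q α s k))) ?_, setLIntegral_const]
    · congr 1
      rw [Real.volume_Ioc]
      congr 1
      ring
    · intro u hu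
      beta_reduce
      have h1 : ν ((⋃ k, pivotEvent m u α s k)ᶜ)
          = 1 - ν (⋃ k, pivotEvent m u α s k) := by
        rw [measure_compl (MeasurableSet.iUnion fun k => meas_pivot m u α s k)
          (measure_ne_top _ _), measure_univ]
      rw [h1, ← sum_pivot_eq m u α hα s hs]
      congr 1
      apply Finset.sum_congr rfl
      intro k _
      have hu1 : (∑ k, s k) ≤ u := le_of_lt (lt_of_le_of_lt (by linarith : (∑ k, s k) ≤ q - ρ) hu.1)
      have := ih s hs u q hu1 (hu.2.trans hqα) (by linarith) hqα k
      exact (ENNReal.toReal_eq_toReal_iff' (measure_ne_top _ _) (measure_ne_top _ _)).mp this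
  have hfinal : cubeMeasure (m+1) (pivotEvent (m+1) q α r i)
      = (ENNReal.ofReal α)⁻¹ *
        ((1 - ∑ k, ν (pivotEvent m q α s k)) * ENNReal.ofReal ρ) := by
    rw [hcube, hprod1, hstep, htone, hmain]
  have hsumle := sum_pivot_le_one m q α hα s hs
  rw [minerValue, hfinal, ENNReal.toReal_mul, ENNReal.toReal_mul, ENNReal.toReal_inv,
    ENNReal.toReal_ofReal hα.le, ENNReal.toReal_ofReal hρ,
    ENNReal.toReal_sub_of_le hsumle ENNReal.one_ne_top, ENNReal.toReal_one,
    ENNReal.toReal_sum (fun k _ => measure_ne_top _ _)]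
  have hmv : ∀ k, (ν (pivotEvent m q α s k)).toReal = minerValue m q α s k := fun k => rfl
  simp_rw [← hν, hmv]
  rw [oceanicValue]
  field_simp


lemma const : ∀ (m : ℕ) (α : ℝ), 0 < α → ∀ (s : Fin m → ℝ), (∀ k, 0 ≤ s k) → ∀ u v : ℝ,
    (∑ k, s k) ≤ u → u ≤ α → (∑ k, s k) ≤ v → v ≤ α → ∀ k,
    minerValue m u α s k = minerValue m v α s k := by
  intro m
  induction m with
  | zero => intro α hα s hs u v h1 h2 h3 h4 k; exact k.elim0
  | succ n ih =>
    intro α hα s hs u v h1 h2 h3 h4 k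
    have hu := key n α hα (ih α hα) s hs u h1 h2 k
    have hv := key n α hα (ih α hα) s hs v h3 h4 k
    have hsub : (∑ j, s (k.succAbove j)) ≤ ∑ j, s j := by
      rw [Fin.sum_univ_succAbove s k]
      have := hs k
      linarith
    have hocean : oceanicValue n u α (fun j => s (k.succAbove j))
        = oceanicValue n v α (fun j => s (k.succAbove j)) := by
      rw [oceanicValue, oceanicValue]
      congr 1
      apply Finset.sum_congr rfl
      intro j _
      exact ih α hα (fun j => s (k.succAbove j)) (fun j => hs _) u v
        (le_trans hsub h1) h2 (le_trans hsub h3) h4 j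
    rw [hocean] at hu
    have := hu.trans hv.symm
    exact mul_left_cancel₀ (ne_of_gt hα) this

end BOG

/-- Entry theorem for an arbitrary quota `q > 0`: the value per unit of resource of a newly
entering miner in `Γ⁺` equals the oceanic value per unit of resource in `Γ`. -/
theorem stmt_2 (m : ℕ) (q α : ℝ) (r : Fin m → ℝ) (w : ℝ) (hq : 0 < q)
    (hr : ∀ j, 0 ≤ r j) (hα : q ≤ α) (hw : 0 < w) (hsum : (∑ j, r j) + w ≤ q) :
    minerValue (m + 1) q α (Fin.snoc r w) (Fin.last m) / w =
      oceanicValue m q α r / α := by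

  have hα0 : 0 < α := lt_of_lt_of_le hq hα
  have hsnoc : ∀ j, 0 ≤ (Fin.snoc r w : Fin (m+1) → ℝ) j := by
    intro j
    induction j using Fin.lastCases with
    | last => rw [Fin.snoc_last]; exact hw.le
    | cast j => rw [Fin.snoc_castSucc]; exact hr j
  have hsum' : (∑ j, (Fin.snoc r w : Fin (m+1) → ℝ) j) ≤ q := by
    rw [Fin.sum_univ_castSucc]
    simp only [Fin.snoc_castSucc, Fin.snoc_last]
    exact hsum
  have hkey := BOG.key m α hα0 (BOG.const m α hα0) (Fin.snoc r w) hsnoc q hsum' hα (Fin.last m)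
  have hfun : (fun k => (Fin.snoc r w : Fin (m+1) → ℝ) ((Fin.last m).succAbove k)) = r := by
    funext k
    rw [Fin.succAbove_last, Fin.snoc_castSucc]
  rw [hfun, Fin.snoc_last] at hkey
  rw [div_eq_div_iff hw.ne' hα0.ne']
  linarith
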